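/- For the one-layer nonlinear regression model, there exists a constant C₀ > 0 such that |⟨∇_θ |h(z; θ) − l|², θ⟩| ≤ C₀ d M_s (|y|² + 1)|θ| for all θ ∈ ℝ^d and y = (z, l) ∈ ℝ^m. -/

import Mathlib

open scoped RealInnerProductSpace

/-- The feature part z of a data point y = (z, l). -/
noncomputable def featurePart (d₀ d₁ : ℕ) (y : EuclideanSpace ℝ (Fin d₀ ⊕ Fin d₁)) :
    EuclideanSpace ℝ (Fin d₀) :=
  WithLp.toLp 2 (fun i => y (Sum.inl i))

/-- The label part l of a data point y = (z, l). -/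
noncomputable def labelPart (d₀ d₁ : ℕ) (y : EuclideanSpace ℝ (Fin d₀ ⊕ Fin d₁)) :
    EuclideanSpace ℝ (Fin d₁) :=
  WithLp.toLp 2 (fun j => y (Sum.inr j))

/-- One-layer network h(z, θ) = s(Wz + g), with θ = (W, g) flattened into
EuclideanSpace ℝ ((Fin d₁ × Fin d₀) ⊕ Fin d₁). -/
noncomputable def oneLayerNet (d₀ d₁ : ℕ) (s : Fin d₁ → ℝ → ℝ)
    (z : EuclideanSpace ℝ (Fin d₀))
    (θ : EuclideanSpace ℝ ((Fin d₁ × Fin d₀) ⊕ Fin d₁)) :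
    EuclideanSpace ℝ (Fin d₁) :=
  WithLp.toLp 2 (fun j => s j ((∑ i : Fin d₀, θ (Sum.inl (j, i)) * z i) + θ (Sum.inr j)))

noncomputable def oneLayerLoss (d₀ d₁ : ℕ) (s : Fin d₁ → ℝ → ℝ)
    (y : EuclideanSpace ℝ (Fin d₀ ⊕ Fin d₁))
    (θ : EuclideanSpace ℝ ((Fin d₁ × Fin d₀) ⊕ Fin d₁)) : ℝ :=
  ‖oneLayerNet d₀ d₁ s (featurePart d₀ d₁ y) θ - labelPart d₀ d₁ y‖ ^ 2

noncomputable def testGrad (d₀ d₁ : ℕ) (s : Fin d₁ → ℝ → ℝ)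
    (y : EuclideanSpace ℝ (Fin d₀ ⊕ Fin d₁))
    (θ : EuclideanSpace ℝ ((Fin d₁ × Fin d₀) ⊕ Fin d₁)) :=
  gradient (oneLayerLoss d₀ d₁ s y) θ

lemma eucl_restrict_norm_le {ι κ : Type*} [Fintype ι] [Fintype κ]
    (φ : κ → ι) (hφ : Function.Injective φ) (x : EuclideanSpace ℝ ι) :
    ‖(WithLp.toLp 2 (fun k => x (φ k)) : EuclideanSpace ℝ κ)‖ ≤ ‖x‖ := by
  rw [EuclideanSpace.norm_eq, EuclideanSpace.norm_eq]
  apply Real.sqrt_le_sqrt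
  calc (∑ k, ‖x (φ k)‖ ^ 2)
      = ∑ i ∈ Finset.univ.map ⟨φ, hφ⟩, ‖x i‖ ^ 2 := by rw [Finset.sum_map]; rfl
    _ ≤ ∑ i, ‖x i‖ ^ 2 := Finset.sum_le_sum_of_subset_of_nonneg (Finset.subset_univ _)
        (fun i _ _ => by positivity)

lemma eucl_abs_coord_le {ι : Type*} [Fintype ι] (x : EuclideanSpace ℝ ι) (k : ι) :
    |x k| ≤ ‖x‖ := by
  rw [EuclideanSpace.norm_eq, ← Real.sqrt_sq_eq_abs]
  apply Real.sqrt_le_sqrt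
  have := Finset.single_le_sum (f := fun i => ‖x i‖ ^ 2) (fun i _ => by positivity)
    (Finset.mem_univ k)
  simpa [Real.norm_eq_abs, sq_abs] using this


set_option maxHeartbeats 1000000 in
open scoped RealInnerProductSpace in
/-- for the one-layer nonlinear regression model with bounded C¹
activations (|s_i|, |s_i'| ≤ M_s), there is C₀ > 0 with
|⟨∇_θ |h(z;θ) − l|², θ⟩| ≤ C₀ d M_s (|y|² + 1)|θ|, where d = d₀d₁ + d₁. -/
theorem oneLayer_gradient_inner_product_bound
    (d₀ d₁ : ℕ) (hd₀ : 0 < d₀) (hd₁ : 0 < d₁)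
    (s : Fin d₁ → ℝ → ℝ) (Ms : ℝ)
    (hsdiff : ∀ j, ContDiff ℝ 1 (s j))
    (hsbd : ∀ j x, |s j x| ≤ Ms)
    (hs'bd : ∀ j x, |deriv (s j) x| ≤ Ms) :
    ∃ C₀ > (0 : ℝ),
      ∀ (θ : EuclideanSpace ℝ ((Fin d₁ × Fin d₀) ⊕ Fin d₁))
        (y : EuclideanSpace ℝ (Fin d₀ ⊕ Fin d₁)),
        |⟪gradient (fun θ' => oneLayerLoss d₀ d₁ s y θ') θ, θ⟫|
          ≤ C₀ * (d₀ * d₁ + d₁ : ℕ) * Ms * (‖y‖ ^ 2 + 1) * ‖θ‖ := by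

  have hMs : 0 ≤ Ms := le_trans (abs_nonneg _) (hsbd ⟨0, hd₁⟩ 0)
  refine ⟨4 * Ms + 4, by linarith, ?_⟩
  intro θ y
  set z : EuclideanSpace ℝ (Fin d₀) := featurePart d₀ d₁ y with hz
  set l : EuclideanSpace ℝ (Fin d₁) := labelPart d₀ d₁ y with hl
  set a : Fin d₁ → EuclideanSpace ℝ ((Fin d₁ × Fin d₀) ⊕ Fin d₁) → ℝ :=
    fun j θ' => (∑ i : Fin d₀, θ' (Sum.inl (j, i)) * z i) + θ' (Sum.inr j) with ha
  set L : Fin d₁ → EuclideanSpace ℝ ((Fin d₁ × Fin d₀) ⊕ Fin d₁) →L[ℝ] ℝ :=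
    fun j => (∑ i : Fin d₀, z i • (EuclideanSpace.proj (Sum.inl (j, i)) :
        EuclideanSpace ℝ ((Fin d₁ × Fin d₀) ⊕ Fin d₁) →L[ℝ] ℝ)) +
      EuclideanSpace.proj (Sum.inr j) with hLdef
  have hLa : ∀ j θ', L j θ' = a j θ' := by
    intro j θ'
    simp [hLdef, ha, ContinuousLinearMap.sum_apply, mul_comm]
  -- rewrite loss as a finite sum
  have hloss : (fun θ' => oneLayerLoss d₀ d₁ s y θ') =
      fun θ' => ∑ j : Fin d₁, (s j (a j θ') - l j) ^ 2 := by
    funext θ'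
    unfold oneLayerLoss
    rw [EuclideanSpace.norm_eq, Real.sq_sqrt (by positivity)]
    refine Finset.sum_congr rfl fun j _ => ?_
    rw [PiLp.sub_apply]
    simp [oneLayerNet, ha, Real.norm_eq_abs, sq_abs]
    rfl
  -- derivative of each term
  have hderiv : ∀ j : Fin d₁, HasFDerivAt (fun θ' => (s j (a j θ') - l j) ^ 2)
      ((2 * (s j (a j θ) - l j) * deriv (s j) (a j θ)) • L j) θ := by
    intro j
    have hA : HasFDerivAt (a j) (L j) θ :=
      ((L j).hasFDerivAt).congr_of_eventuallyEq
        (Filter.Eventually.of_forall fun θ' => (hLa j θ').symm)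
    have hs0 : HasDerivAt (s j) (deriv (s j) (a j θ)) (a j θ) :=
      (((hsdiff j).differentiable one_ne_zero) (a j θ)).hasDerivAt
    have hcomp := hs0.comp_hasFDerivAt θ hA
    have hsub := hcomp.sub_const (l j)
    have hfun : (fun θ' => (s j (a j θ') - l j) ^ 2)
        = fun θ' => ((s j ∘ a j) θ' - l j) * ((s j ∘ a j) θ' - l j) := by
      funext θ'; simp [Function.comp]; ring
    have hCLM : (2 * (s j (a j θ) - l j) * deriv (s j) (a j θ)) • L j
        = ((s j ∘ a j) θ - l j) • (deriv (s j) (a j θ) • L j)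
          + ((s j ∘ a j) θ - l j) • (deriv (s j) (a j θ) • L j) := by
      ext v
      simp [Function.comp, ContinuousLinearMap.smul_apply, smul_eq_mul]
      ring
    rw [hfun, hCLM]
    exact hsub.mul hsub
  have hsum : HasFDerivAt (fun θ' => ∑ j : Fin d₁, (s j (a j θ') - l j) ^ 2)
      (∑ j : Fin d₁, (2 * (s j (a j θ) - l j) * deriv (s j) (a j θ)) • L j) θ :=
    HasFDerivAt.fun_sum fun j _ => hderiv j
  have hfd : fderiv ℝ (fun θ' => oneLayerLoss d₀ d₁ s y θ') θ
      = ∑ j : Fin d₁, (2 * (s j (a j θ) - l j) * deriv (s j) (a j θ)) • L j := by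
    rw [hloss]; exact hsum.fderiv
  have hinner : ⟪gradient (fun θ' => oneLayerLoss d₀ d₁ s y θ') θ, θ⟫
      = ∑ j : Fin d₁, (2 * (s j (a j θ) - l j) * deriv (s j) (a j θ)) * a j θ := by
    unfold gradient
    rw [InnerProductSpace.toDual_symm_apply, hfd, ContinuousLinearMap.sum_apply]
    exact Finset.sum_congr rfl fun j _ => by
      rw [ContinuousLinearMap.smul_apply, smul_eq_mul, hLa]
  -- bounds
  have hθn : (0:ℝ) ≤ ‖θ‖ := norm_nonneg _
  have hyn : (0:ℝ) ≤ ‖y‖ := norm_nonneg _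
  have hzb : ‖z‖ ≤ ‖y‖ := eucl_restrict_norm_le Sum.inl Sum.inl_injective y
  have hlb : ∀ j, |l j| ≤ ‖y‖ := fun j => eucl_abs_coord_le y (Sum.inr j)
  have haj : ∀ j, |a j θ| ≤ ‖θ‖ * (‖y‖ + 1) := by
    intro j
    have hun : ‖(WithLp.toLp 2 (fun i => θ (Sum.inl (j, i))) : EuclideanSpace ℝ (Fin d₀))‖ ≤ ‖θ‖ :=
      eucl_restrict_norm_le (fun i => Sum.inl (j, i)) (fun i₁ i₂ h => by simpa using h) θ
    have h1 : |∑ i : Fin d₀, θ (Sum.inl (j, i)) * z i| ≤ ‖θ‖ * ‖y‖ := by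
      have hip : (∑ i : Fin d₀, θ (Sum.inl (j, i)) * z i)
          = ⟪(WithLp.toLp 2 (fun i => θ (Sum.inl (j, i))) : EuclideanSpace ℝ (Fin d₀)), z⟫ := by
        simp [PiLp.inner_apply, mul_comm]
      rw [hip]
      exact (abs_real_inner_le_norm _ _).trans
        (mul_le_mul hun hzb (norm_nonneg z) hθn)
    have h2 : |θ (Sum.inr j)| ≤ ‖θ‖ := eucl_abs_coord_le θ _
    calc |a j θ| ≤ |∑ i : Fin d₀, θ (Sum.inl (j, i)) * z i| + |θ (Sum.inr j)| :=
          abs_add_le _ _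
      _ ≤ ‖θ‖ * ‖y‖ + ‖θ‖ := add_le_add h1 h2
      _ = ‖θ‖ * (‖y‖ + 1) := by ring
  have hterm : ∀ j : Fin d₁,
      |(2 * (s j (a j θ) - l j) * deriv (s j) (a j θ)) * a j θ|
        ≤ 2 * (Ms + ‖y‖) * Ms * (‖θ‖ * (‖y‖ + 1)) := by
    intro j
    have h1 : |s j (a j θ) - l j| ≤ Ms + ‖y‖ := by
      calc |s j (a j θ) - l j| ≤ |s j (a j θ)| + |l j| := abs_sub _ _
        _ ≤ Ms + ‖y‖ := add_le_add (hsbd j _) (hlb j)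
    rw [abs_mul, abs_mul, abs_mul, abs_two]
    gcongr
    · exact hs'bd j _
    · exact haj j
  rw [hinner]
  have hD : ((d₁ : ℝ)) ≤ ((d₀ * d₁ + d₁ : ℕ) : ℝ) := by
    exact_mod_cast Nat.le_add_left d₁ (d₀ * d₁)
  have hq : (Ms + ‖y‖) * (‖y‖ + 1) ≤ (2 * Ms + 2) * (‖y‖ ^ 2 + 1) := by
    nlinarith [sq_nonneg (‖y‖ - 1), mul_nonneg hMs (sq_nonneg (‖y‖ - 1)),
      mul_nonneg hMs (mul_nonneg hyn hyn), mul_nonneg hMs hyn]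
  calc |∑ j : Fin d₁, (2 * (s j (a j θ) - l j) * deriv (s j) (a j θ)) * a j θ|
      ≤ ∑ j : Fin d₁, |(2 * (s j (a j θ) - l j) * deriv (s j) (a j θ)) * a j θ| :=
        Finset.abs_sum_le_sum_abs _ _
    _ ≤ ∑ _j : Fin d₁, 2 * (Ms + ‖y‖) * Ms * (‖θ‖ * (‖y‖ + 1)) :=
        Finset.sum_le_sum fun j _ => hterm j
    _ = (d₁ : ℝ) * (2 * (Ms + ‖y‖) * Ms * (‖θ‖ * (‖y‖ + 1))) := by
        rw [Finset.sum_const, Finset.card_univ, Fintype.card_fin]; ring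
    _ = (d₁ : ℝ) * ((2 * Ms * ‖θ‖) * ((Ms + ‖y‖) * (‖y‖ + 1))) := by ring
    _ ≤ (d₁ : ℝ) * ((2 * Ms * ‖θ‖) * ((2 * Ms + 2) * (‖y‖ ^ 2 + 1))) := by gcongr
    _ ≤ ((d₀ * d₁ + d₁ : ℕ) : ℝ) * ((2 * Ms * ‖θ‖) * ((2 * Ms + 2) * (‖y‖ ^ 2 + 1))) := by
        gcongr
    _ = (4 * Ms + 4) * ((d₀ * d₁ + d₁ : ℕ) : ℝ) * Ms * (‖y‖ ^ 2 + 1) * ‖θ‖ := by ring
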